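/- Let β be a mixed base, m ≥ 1, and let 𝒞 ⊆ ℕ^m satisfy adequate covering: for all X ∈ ℕ^m and all h < σ_β(X) there is C ∈ 𝒞 with X - C ∈ ℕ^m and σ_β(X - C) = h. Let X ∈ ℕ^m, n = σ_β(X), h ≠ n, N = max{L : n_L ≠ h_L}, and suppose some D ∈ ℕ^m satisfies X_{≤N} - D ∈ ℕ^m, X - D ∈ ℕ^m, and σ_β(X - D) = h. Then there exists C ∈ 𝒞 with X - C ∈ ℕ^m and σ_β(X - C) = h. -/

import Mathlib

open scoped BigOperators

/-- β̂_L = β_0 ⋯ β_{L-1}, the place value of digit L in mixed base β. -/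
def bhat (β : ℕ → ℕ) (L : ℕ) : ℕ := ∏ i ∈ Finset.range L, β i

/-- The L-th digit of n in the mixed base β. -/
def mdigit (β : ℕ → ℕ) (n L : ℕ) : ℕ := n / bhat β L % β L

/-- Digit-wise addition modulo β_L in mixed base β. -/
def moplus (β : ℕ → ℕ) (n h : ℕ) : ℕ :=
  ∑ L ∈ Finset.range (n + h + 1), ((mdigit β n L + mdigit β h L) % β L) * bhat β L

/-- Digit-wise subtraction modulo β_L in mixed base β. -/
def mominus (β : ℕ → ℕ) (n h : ℕ) : ℕ :=
  ∑ L ∈ Finset.range (n + h + 1), ((β L + mdigit β n L - mdigit β h L) % β L) * bhat β L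

/-- σ_β(X) = x^0 ⊕ ⋯ ⊕ x^{m-1}: the digit-wise Nim sum in mixed base β. -/
def msigma (β : ℕ → ℕ) {m : ℕ} (X : Fin m → ℕ) : ℕ :=
  ∑ L ∈ Finset.range (∑ i, X i + 1), ((∑ i, mdigit β (X i) L) % β L) * bhat β L

/-- Hamming weight: number of nonzero components. -/
def hamwt {m : ℕ} (C : Fin m → ℕ) : ℕ := (Finset.univ.filter (fun i => C i ≠ 0)).card

/-- ord_β(n): the largest L with β̂_L ∣ n (⊤ for n = 0). -/
def mord (β : ℕ → ℕ) (n : ℕ) : ℕ∞ :=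
  if n = 0 then ⊤ else (Nat.findGreatest (fun L => bhat β L ∣ n) n : ℕ∞)

/-- 𝒞 is a Sprague-Grundy system of σ_β: its members are nonzero moves and
σ_β satisfies the mex recursion of the take-away game Γ(ℕ^m, 𝒞), i.e. σ_β is the
Sprague-Grundy function of that game. -/
def IsSGSystem (β : ℕ → ℕ) {m : ℕ} (𝒞 : Set (Fin m → ℕ)) : Prop :=
  (∀ C ∈ 𝒞, C ≠ 0) ∧
  ∀ X : Fin m → ℕ, msigma β X =
    sInf {n : ℕ | ∀ C ∈ 𝒞, (∀ i, C i ≤ X i) → msigma β (fun i => X i - C i) ≠ n}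

section Aux
variable {β : ℕ → ℕ}

lemma bhat_succ (β : ℕ → ℕ) (L : ℕ) : bhat β (L + 1) = bhat β L * β L :=
  Finset.prod_range_succ _ _

lemma bhat_pos (hβ : ∀ L, 2 ≤ β L) (L : ℕ) : 0 < bhat β L :=
  Finset.prod_pos fun i _ => lt_of_lt_of_le two_pos (hβ i)

lemma bhat_dvd {K L : ℕ} (h : K ≤ L) : bhat β K ∣ bhat β L :=
  Finset.prod_dvd_prod_of_subset _ _ _ (Finset.range_subset_range.mpr h)

lemma bhat_le (hβ : ∀ L, 2 ≤ β L) {K L : ℕ} (h : K ≤ L) : bhat β K ≤ bhat β L :=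
  Nat.le_of_dvd (bhat_pos hβ L) (bhat_dvd h)

lemma two_pow_le_bhat (hβ : ∀ L, 2 ≤ β L) (L : ℕ) : 2 ^ L ≤ bhat β L := by
  induction L with
  | zero => simp [bhat]
  | succ L ih =>
      rw [bhat_succ, pow_succ]
      exact Nat.mul_le_mul ih (hβ L)

lemma lt_bhat (hβ : ∀ L, 2 ≤ β L) (n : ℕ) : n < bhat β n :=
  lt_of_lt_of_le (Nat.lt_two_pow_self (n := n)) (two_pow_le_bhat hβ n)

lemma mdigit_lt (hβ : ∀ L, 2 ≤ β L) (n L : ℕ) : mdigit β n L < β L :=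
  Nat.mod_lt _ (lt_of_lt_of_le two_pos (hβ L))

lemma mdigit_eq_mod_div (n L : ℕ) :
    mdigit β n L = n % bhat β (L + 1) / bhat β L := by
  rw [mdigit, bhat_succ, Nat.mod_mul_right_div_self]

lemma mdigit_eq_zero (h : n < bhat β L) : mdigit β n L = 0 := by
  rw [mdigit, Nat.div_eq_of_lt h, Nat.zero_mod]

lemma mdigit_mod {K L : ℕ} (h : L < K) (n : ℕ) :
    mdigit β (n % bhat β K) L = mdigit β n L := by
  rw [mdigit_eq_mod_div, mdigit_eq_mod_div, Nat.mod_mod_of_dvd _ (bhat_dvd h)]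

lemma mdigit_add_high_low {a b N L : ℕ} (ha : bhat β (N + 1) ∣ a)
    (hL : L ≤ N) : mdigit β (a + b) L = mdigit β b L := by
  obtain ⟨c, rfl⟩ := (bhat_dvd (Nat.succ_le_succ hL)).trans ha
  rw [mdigit_eq_mod_div, mdigit_eq_mod_div, Nat.mul_add_mod]

lemma mdigit_add_high_high (hβ : ∀ L, 2 ≤ β L) {a b N L : ℕ} (ha : bhat β (N + 1) ∣ a)
    (hb : b < bhat β (N + 1)) (hL : N < L) : mdigit β (a + b) L = mdigit β a L := by
  obtain ⟨c, hc⟩ := ha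
  obtain ⟨p, hp⟩ := bhat_dvd (show N + 1 ≤ L from hL)
  have h1 : (a + b) / bhat β (N + 1) = a / bhat β (N + 1) := by
    rw [hc, Nat.mul_add_div (bhat_pos hβ _), Nat.div_eq_of_lt hb,
      Nat.mul_div_cancel_left _ (bhat_pos hβ _), Nat.add_zero]
  unfold mdigit
  rw [hp, ← Nat.div_div_eq_div_mul, ← Nat.div_div_eq_div_mul, h1]

lemma sum_digits_lt (hβ : ∀ L, 2 ≤ β L) (c : ℕ → ℕ) (hc : ∀ L, c L < β L) (K : ℕ) :
    ∑ L ∈ Finset.range K, c L * bhat β L < bhat β K := by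
  induction K with
  | zero => simpa [bhat] using bhat_pos hβ 0
  | succ K ih =>
      rw [Finset.sum_range_succ, bhat_succ]
      calc ∑ L ∈ Finset.range K, c L * bhat β L + c K * bhat β K
          < bhat β K + c K * bhat β K := by omega
        _ = (c K + 1) * bhat β K := by ring
        _ ≤ β K * bhat β K := Nat.mul_le_mul_right _ (hc K)
        _ = bhat β K * β K := Nat.mul_comm _ _

lemma mdigit_sum_repr (hβ : ∀ L, 2 ≤ β L) (c : ℕ → ℕ) (hc : ∀ L, c L < β L) (K M : ℕ) :
    mdigit β (∑ L ∈ Finset.range K, c L * bhat β L) M =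
      if M < K then c M else 0 := by
  induction K generalizing M with
  | zero => simp [mdigit, bhat, Nat.div_eq_of_lt]
  | succ K ih =>
      rw [Finset.sum_range_succ]
      rcases lt_trichotomy M K with hM | rfl | hM
      · rw [if_pos (by omega)]
        have : mdigit β (∑ L ∈ Finset.range K, c L * bhat β L + c K * bhat β K) M
            = mdigit β (∑ L ∈ Finset.range K, c L * bhat β L) M := by
          rw [Nat.add_comm]
          exact mdigit_add_high_low (N := K - 1)
            (Dvd.dvd.mul_left (by simpa using bhat_dvd (show (K-1)+1 ≤ K by omega)) _)
            (by omega)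
        rw [this, ih, if_pos hM]
      · rw [if_pos (by omega)]
        have hlow := sum_digits_lt hβ c hc M
        rw [mdigit, Nat.add_comm, Nat.mul_comm, Nat.mul_add_div (bhat_pos hβ M),
          Nat.div_eq_of_lt hlow, Nat.add_zero, Nat.mod_eq_of_lt (hc M)]
      · rw [if_neg (by omega)]
        apply mdigit_eq_zero
        have h1 := sum_digits_lt hβ c hc (K + 1)
        rw [Finset.sum_range_succ] at h1
        exact lt_of_lt_of_le h1 (bhat_le hβ (by omega))

end Aux

section Aux2
variable {β : ℕ → ℕ}

/-- Digits of msigma. -/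
lemma mdigit_msigma (hβ : ∀ L, 2 ≤ β L) {m : ℕ} (X : Fin m → ℕ) (M : ℕ) :
    mdigit β (msigma β X) M = (∑ i, mdigit β (X i) M) % β M := by
  have hc : ∀ L, (∑ i, mdigit β (X i) L) % β L < β L :=
    fun L => Nat.mod_lt _ (lt_of_lt_of_le two_pos (hβ L))
  rw [msigma, mdigit_sum_repr hβ _ hc]
  split_ifs with h
  · rfl
  · -- M ≥ ∑ X + 1, so all digits vanish
    have hz : ∀ i, mdigit β (X i) M = 0 := by
      intro i
      apply mdigit_eq_zero
      have h1 : X i ≤ ∑ j, X j := Finset.single_le_sum (fun j _ => Nat.zero_le _) (Finset.mem_univ i)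
      have h2 : (∑ j, X j) < bhat β (∑ j, X j + 1) :=
        lt_of_lt_of_le (lt_bhat hβ _) (bhat_le hβ (by omega))
      exact lt_of_le_of_lt h1 (lt_of_lt_of_le h2 (bhat_le hβ (by omega)))
    rw [Finset.sum_eq_zero (fun i _ => hz i), Nat.zero_mod]

/-- Representation: a number below β̂ K equals the weighted sum of its digits. -/
lemma repr_eq (hβ : ∀ L, 2 ≤ β L) {K b : ℕ} (hb : b < bhat β K) :
    b = ∑ L ∈ Finset.range K, mdigit β b L * bhat β L := by
  induction K generalizing b with
  | zero => simpa [bhat] using hb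
  | succ K ih =>
      have hdiv : b / bhat β K < β K := by
        rw [Nat.div_lt_iff_lt_mul (bhat_pos hβ K)]
        calc b < bhat β (K + 1) := hb
          _ = β K * bhat β K := by rw [bhat_succ]; ring
      have hdig : mdigit β b K = b / bhat β K := by
        rw [mdigit, Nat.mod_eq_of_lt hdiv]
      have hmod : ∀ L ∈ Finset.range K, mdigit β (b % bhat β K) L * bhat β L
          = mdigit β b L * bhat β L := by
        intro L hL
        rw [mdigit_mod (Finset.mem_range.mp hL)]
      have ihm := ih (b := b % bhat β K) (Nat.mod_lt _ (bhat_pos hβ K))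
      rw [Finset.sum_congr rfl hmod] at ihm
      rw [Finset.sum_range_succ, ← ihm, hdig]
      exact (Nat.mod_add_div' b _).symm

/-- A number whose digits all vanish from K on is < β̂ K. -/
lemma lt_bhat_of_digits (hβ : ∀ L, 2 ≤ β L) {K b : ℕ}
    (h : ∀ M, K ≤ M → mdigit β b M = 0) : b < bhat β K := by
  set K' := max K b with hK'
  have hb : b < bhat β K' :=
    lt_of_lt_of_le (lt_bhat hβ b) (bhat_le hβ (le_max_right _ _))
  have hrepr := repr_eq hβ hb
  have hsub : ∑ L ∈ Finset.range K', mdigit β b L * bhat β L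
      = ∑ L ∈ Finset.range K, mdigit β b L * bhat β L := by
    symm
    apply Finset.sum_subset (Finset.range_subset_range.mpr (le_max_left _ _))
    intro L hL hLK
    rw [h L (by simpa using hLK), Nat.zero_mul]
  rw [hrepr, hsub]
  exact sum_digits_lt hβ _ (fun L => mdigit_lt hβ b L) K

/-- Two numbers with the same digits are equal. -/
lemma digits_inj (hβ : ∀ L, 2 ≤ β L) {a b : ℕ}
    (h : ∀ L, mdigit β a L = mdigit β b L) : a = b := by
  set K := max a b + 1 with hK
  have ha : a < bhat β K := lt_of_lt_of_le (lt_bhat hβ a) (bhat_le hβ (by omega))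
  have hb : b < bhat β K := lt_of_lt_of_le (lt_bhat hβ b) (bhat_le hβ (by omega))
  rw [repr_eq hβ ha, repr_eq hβ hb]
  exact Finset.sum_congr rfl fun L _ => by rw [h L]

/-- msigma is bounded by β̂ K if all components are. -/
lemma msigma_lt (hβ : ∀ L, 2 ≤ β L) {m K : ℕ} {X : Fin m → ℕ}
    (h : ∀ i, X i < bhat β K) : msigma β X < bhat β K := by
  apply lt_bhat_of_digits hβ
  intro M hM
  rw [mdigit_msigma hβ]
  have : ∀ i, mdigit β (X i) M = 0 := fun i =>
    mdigit_eq_zero (lt_of_lt_of_le (h i) (bhat_le hβ hM))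
  rw [Finset.sum_eq_zero (fun i _ => this i), Nat.zero_mod]

/-- Decomposition of x < β̂(N+1). -/
lemma dec_eq (hβ : ∀ L, 2 ≤ β L) {N x : ℕ} (hx : x < bhat β (N + 1)) :
    x = bhat β N * mdigit β x N + x % bhat β N := by
  have hdiv : x / bhat β N < β N := by
    rw [Nat.div_lt_iff_lt_mul (bhat_pos hβ N)]
    calc x < bhat β (N + 1) := hx
      _ = β N * bhat β N := by rw [bhat_succ]; ring
  have hdig : mdigit β x N = x / bhat β N := by
    rw [mdigit, Nat.mod_eq_of_lt hdiv]
  rw [hdig]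
  exact (Nat.div_add_mod x _).symm

end Aux2

section Aux3
variable {β : ℕ → ℕ}

lemma mod_sub_one {b s v : ℕ} (hb : 0 < b) (hv : s % b = v) (h1 : 1 ≤ v) :
    (s - 1) % b = v - 1 := by
  have hd := Nat.div_add_mod s b
  have hlt : v < b := hv ▸ Nat.mod_lt _ hb
  have h2 : s - 1 = b * (s / b) + (v - 1) := by omega
  rw [h2, Nat.mul_add_mod, Nat.mod_eq_of_lt (by omega)]

lemma mod_sub_one_zero {b s : ℕ} (hb : 0 < b) (hv : s % b = 0) (h1 : 1 ≤ s) :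
    (s - 1) % b = b - 1 := by
  obtain ⟨q, hd⟩ : ∃ q, b * q + s % b = s := ⟨s / b, Nat.div_add_mod s b⟩
  have hq : q ≠ 0 := fun h => by rw [h, Nat.mul_zero] at hd; omega
  have h2 : b * (q - 1) + b = b * q := by rw [← Nat.mul_succ]; congr 1; omega
  have h3 : s - 1 = b * (q - 1) + (b - 1) := by omega
  rw [h3, Nat.mul_add_mod, Nat.mod_eq_of_lt (by omega)]

lemma mod_add_one {b s v : ℕ} (hv : s % b = v) (h1 : v + 1 < b) :
    (s + 1) % b = v + 1 := by
  have hd := Nat.div_add_mod s b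
  have h2 : s + 1 = b * (s / b) + (v + 1) := by omega
  rw [h2, Nat.mul_add_mod, Nat.mod_eq_of_lt h1]

lemma one_le_mdigit (hβ : ∀ L, 2 ≤ β L) {N x : ℕ} (hx : x < bhat β (N + 1))
    (h : bhat β N ≤ x) : 1 ≤ mdigit β x N := by
  have hdec := dec_eq hβ hx
  have hr : x % bhat β N < bhat β N := Nat.mod_lt _ (bhat_pos hβ N)
  by_contra hc
  push_neg at hc
  have h0 : mdigit β x N = 0 := by omega
  rw [h0, Nat.mul_zero, Nat.zero_add] at hdec
  omega

lemma bhat_le_of_mdigit_pos (hβ : ∀ L, 2 ≤ β L) {N x : ℕ} (hx : x < bhat β (N + 1))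
    (h : 1 ≤ mdigit β x N) : bhat β N ≤ x := by
  have hdec := dec_eq hβ hx
  have h2 : bhat β N * 1 ≤ bhat β N * mdigit β x N := Nat.mul_le_mul_left _ h
  omega

lemma mdigit_split (hβ : ∀ L, 2 ≤ β L) {N r k : ℕ} (hr : r < bhat β N) (hk : k < β N)
    (L : ℕ) : mdigit β (bhat β N * k + r) L =
      if L < N then mdigit β r L else if L = N then k else 0 := by
  rcases lt_trichotomy L N with hL | rfl | hL
  · rw [if_pos hL]
    obtain ⟨p, hp⟩ := bhat_dvd (show L + 1 ≤ N from hL)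
    rw [mdigit_eq_mod_div, mdigit_eq_mod_div, hp]
    congr 1
    rw [Nat.mul_assoc, Nat.mul_add_mod]
  · rw [if_neg (lt_irrefl L), if_pos rfl, mdigit, Nat.mul_add_div (bhat_pos hβ L),
      Nat.div_eq_of_lt hr, Nat.add_zero, Nat.mod_eq_of_lt hk]
  · rw [if_neg (by omega), if_neg (by omega)]
    apply mdigit_eq_zero
    have h1 : bhat β N * (k + 1) = bhat β N * k + bhat β N := Nat.mul_succ _ _
    have h2 : bhat β N * (k + 1) ≤ bhat β N * β N := Nat.mul_le_mul_left _ hk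
    have h3 : bhat β N * β N = bhat β (N + 1) := (bhat_succ β N).symm
    have h4 : bhat β (N + 1) ≤ bhat β L := bhat_le hβ (by omega)
    omega

lemma mdigit_sub_bhat (hβ : ∀ L, 2 ≤ β L) {N x : ℕ} (hx : x < bhat β (N + 1))
    (hge : bhat β N ≤ x) (L : ℕ) :
    mdigit β (x - bhat β N) L =
      if L < N then mdigit β x L else if L = N then mdigit β x N - 1 else 0 := by
  have hdec := dec_eq hβ hx
  have hr : x % bhat β N < bhat β N := Nat.mod_lt _ (bhat_pos hβ N)
  have hd1 : 1 ≤ mdigit β x N := one_le_mdigit hβ hx hge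
  have hdN : mdigit β x N < β N := mdigit_lt hβ x N
  have hsub : x - bhat β N = bhat β N * (mdigit β x N - 1) + x % bhat β N := by
    have h2 : bhat β N * (mdigit β x N - 1) + bhat β N = bhat β N * mdigit β x N := by
      rw [← Nat.mul_succ]; congr 1; omega
    omega
  rw [hsub, mdigit_split hβ hr (by omega) L]
  split_ifs with h1 h2
  · rw [mdigit_mod h1]
  · rfl
  · rfl

end Aux3

section MainLemma
variable {β : ℕ → ℕ}

/-- Sum over `Fin m` splits off one index. -/
lemma sum_split {m : ℕ} (i0 : Fin m) (f : Fin m → ℕ) :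
    ∑ i, f i = f i0 + ∑ i ∈ Finset.univ.erase i0, f i :=
  (Finset.add_sum_erase _ f (Finset.mem_univ i0)).symm

/-- The key induction: covering within the truncated world. -/
lemma RP (hβ : ∀ L, 2 ≤ β L) {m : ℕ} (𝒞 : Set (Fin m → ℕ))
    (hcov : ∀ X : Fin m → ℕ, ∀ h < msigma β X,
      ∃ C ∈ 𝒞, (∀ i, C i ≤ X i) ∧ msigma β (fun i => X i - C i) = h)
    (N : ℕ) :
    ∀ S : ℕ, ∀ W D : Fin m → ℕ, ∀ hb : ℕ,
      (∀ i, W i < bhat β (N + 1)) → (∑ i, mdigit β (W i) N) = S →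
      (∀ i, D i ≤ W i) → msigma β (fun i => W i - D i) = hb →
      mdigit β hb N ≠ mdigit β (msigma β W) N →
      ∃ C ∈ 𝒞, (∀ i, C i ≤ W i) ∧ msigma β (fun i => W i - C i) = hb := by
  intro S
  induction S using Nat.strong_induction_on with
  | _ S IH =>
  intro W D hb hWlt hS hDW hsig hdiff
  have hβN : 0 < β N := lt_of_lt_of_le two_pos (hβ N)
  have hBpos : 0 < bhat β N := bhat_pos hβ N
  have hWD_lt : ∀ i, W i - D i < bhat β (N + 1) :=
    fun i => lt_of_le_of_lt (Nat.sub_le _ _) (hWlt i)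
  have hhb_lt : hb < bhat β (N + 1) := hsig ▸ msigma_lt hβ hWD_lt
  have hnbar_lt : msigma β W < bhat β (N + 1) := msigma_lt hβ hWlt
  set nN := mdigit β (msigma β W) N with hnN
  set hN := mdigit β hb N with hhN
  have hnN_eq : nN = S % β N := by
    rw [hnN, mdigit_msigma hβ, hS]
  have hhN_lt : hN < β N := mdigit_lt hβ hb N
  rcases lt_trichotomy hN nN with hlt | heq | hgt
  · -- easy case: hb < msigma W, apply covering directly
    apply hcov
    have hdec1 := dec_eq hβ hhb_lt
    have hdec2 := dec_eq hβ hnbar_lt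
    rw [← hhN] at hdec1
    rw [← hnN] at hdec2
    have hr1 : hb % bhat β N < bhat β N := Nat.mod_lt _ hBpos
    have h2 : bhat β N * (hN + 1) = bhat β N * hN + bhat β N := Nat.mul_succ _ _
    have h3 : bhat β N * (hN + 1) ≤ bhat β N * nN := Nat.mul_le_mul_left _ hlt
    omega
  · exact absurd heq hdiff
  · -- hard case
    have hhN1 : 1 ≤ hN := by omega
    set S' := ∑ i, mdigit β (W i - D i) N with hS'
    have hS'N : S' % β N = hN := by
      rw [hhN, ← hsig, mdigit_msigma hβ]
    obtain ⟨i0, h0⟩ : ∃ i0, 1 ≤ mdigit β (W i0 - D i0) N := by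
      by_contra hc
      push_neg at hc
      have : S' = 0 := Finset.sum_eq_zero fun i _ => by have := hc i; omega
      rw [this] at hS'N
      simp at hS'N
      omega
    have hx0lt : W i0 - D i0 < bhat β (N + 1) := hWD_lt i0
    have hge : bhat β N ≤ W i0 - D i0 := bhat_le_of_mdigit_pos hβ hx0lt (h0)
    have hDWi0 : D i0 ≤ W i0 := hDW i0
    have hBW : bhat β N + D i0 ≤ W i0 := by omega
    set W' : Fin m → ℕ := fun i => if i = i0 then W i0 - bhat β N else W i with hW'
    have hW'i0 : W' i0 = W i0 - bhat β N := by simp [hW']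
    have hW'ne : ∀ i, i ≠ i0 → W' i = W i := fun i hi => by simp [hW', hi]
    have hW'le : ∀ i, W' i ≤ W i := by
      intro i
      by_cases hi : i = i0
      · subst hi; rw [hW'i0]; omega
      · rw [hW'ne i hi]
    have hW'lt : ∀ i, W' i < bhat β (N + 1) := fun i => lt_of_le_of_lt (hW'le i) (hWlt i)
    have hDW' : ∀ i, D i ≤ W' i := by
      intro i
      by_cases hi : i = i0
      · subst hi; rw [hW'i0]; omega
      · rw [hW'ne i hi]; exact hDW i
    have hBWi0 : bhat β N ≤ W i0 := by omega
    -- digits of W' i0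
    have hdWi0 := mdigit_sub_bhat hβ (hWlt i0) hBWi0
    -- the new remainder
    set R : Fin m → ℕ := fun i => W' i - D i with hR
    have hRi0 : R i0 = (W i0 - D i0) - bhat β N := by
      simp only [hR, hW'i0]; omega
    have hRne : ∀ i, i ≠ i0 → R i = W i - D i := fun i hi => by
      simp only [hR, hW'ne i hi]
    have hdRi0 := mdigit_sub_bhat hβ hx0lt hge
    set g' := msigma β R with hg'
    -- digit sums of W'
    have hsumW'N : ∑ i, mdigit β (W' i) N = S - 1 := by
      rw [sum_split i0, hW'i0, hdWi0 N, if_neg (lt_irrefl N), if_pos rfl]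
      rw [sum_split i0 (fun i => mdigit β (W i) N)] at hS
      have hsc : ∑ i ∈ Finset.univ.erase i0, mdigit β (W' i) N
          = ∑ i ∈ Finset.univ.erase i0, mdigit β (W i) N :=
        Finset.sum_congr rfl fun i hi => by
          rw [hW'ne i (Finset.mem_erase.mp hi).1]
      have hd1 : 1 ≤ mdigit β (W i0) N := one_le_mdigit hβ (hWlt i0) hBWi0
      omega
    have hS1 : 1 ≤ S := by
      have hd1 : 1 ≤ mdigit β (W i0) N := one_le_mdigit hβ (hWlt i0) hBWi0
      rw [sum_split i0 (fun i => mdigit β (W i) N)] at hS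
      omega
    -- digits of g' at N
    have hsumRN : ∑ i, mdigit β (R i) N = S' - 1 := by
      rw [sum_split i0, hRi0, hdRi0 N, if_neg (lt_irrefl N), if_pos rfl]
      rw [hS', sum_split i0 (fun i => mdigit β (W i - D i) N)]
      have hsc : ∑ i ∈ Finset.univ.erase i0, mdigit β (R i) N
          = ∑ i ∈ Finset.univ.erase i0, mdigit β (W i - D i) N :=
        Finset.sum_congr rfl fun i hi => by
          rw [hRne i (Finset.mem_erase.mp hi).1]
      omega
    have hS'1 : 1 ≤ S' := by
      rw [hS', sum_split i0 (fun i => mdigit β (W i - D i) N)]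
      omega
    have hg'N : mdigit β g' N = hN - 1 := by
      rw [hg', mdigit_msigma hβ]
      show (∑ i, mdigit β (R i) N) % β N = hN - 1
      rw [hsumRN]
      exact mod_sub_one hβN hS'N hhN1
    -- digits of msigma W' at N
    have hW'N : mdigit β (msigma β W') N = (S - 1) % β N := by
      rw [mdigit_msigma hβ, hsumW'N]
    have hdiff' : mdigit β g' N ≠ mdigit β (msigma β W') N := by
      rw [hg'N, hW'N]
      rcases Nat.eq_zero_or_pos nN with h0n | h1n
      · rw [mod_sub_one_zero hβN (by omega : S % β N = 0) hS1]
        omega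
      · rw [mod_sub_one hβN hnN_eq.symm h1n]
        omega
    -- apply the induction hypothesis
    obtain ⟨C, hC𝒞, hCle, hCsig⟩ :=
      IH (S - 1) (by omega) W' D g' hW'lt hsumW'N hDW' rfl hdiff'
    refine ⟨C, hC𝒞, fun i => le_trans (hCle i) (hW'le i), ?_⟩
    -- now show msigma (W - C) = hb
    have hCi0 : C i0 ≤ W i0 - bhat β N := hW'i0 ▸ hCle i0
    set y := W i0 - C i0 with hy
    have hy1 : y < bhat β (N + 1) := lt_of_le_of_lt (Nat.sub_le _ _) (hWlt i0)
    have hy2 : bhat β N ≤ y := by omega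
    have hyW' : W' i0 - C i0 = y - bhat β N := by rw [hW'i0]; omega
    have hdy := mdigit_sub_bhat hβ hy1 hy2
    have hdy1 : 1 ≤ mdigit β y N := one_le_mdigit hβ hy1 hy2
    have hWC_lt : ∀ i, W i - C i < bhat β (N + 1) :=
      fun i => lt_of_le_of_lt (Nat.sub_le _ _) (hWlt i)
    apply digits_inj hβ
    intro L
    rw [mdigit_msigma hβ]
    have hgL : ∀ L', mdigit β g' L' = (∑ i, mdigit β (W' i - C i) L') % β L' := by
      intro L'
      rw [← hCsig, mdigit_msigma hβ]
    rcases lt_trichotomy L N with hL | heq | hL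
    · -- low digits: sums agree with W' - C, and g' agrees with hb
      have hsum_eq : ∑ i, mdigit β (W i - C i) L = ∑ i, mdigit β (W' i - C i) L := by
        rw [sum_split i0 (fun i => mdigit β (W i - C i) L),
          sum_split i0 (fun i => mdigit β (W' i - C i) L), hyW', ← hy, hdy L, if_pos hL]
        congr 1
        exact Finset.sum_congr rfl fun i hi => by
          rw [hW'ne i (Finset.mem_erase.mp hi).1]
      rw [hsum_eq, ← hgL L]
      -- mdigit g' L = mdigit hb L for L < N
      have h1 : mdigit β g' L = mdigit β hb L := by
        rw [hg', mdigit_msigma hβ, ← hsig, mdigit_msigma hβ]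
        congr 1
        rw [sum_split i0 (fun i => mdigit β (R i) L),
          sum_split i0 (fun i => mdigit β (W i - D i) L), hRi0, hdRi0 L, if_pos hL]
        congr 1
        exact Finset.sum_congr rfl fun i hi => by
          rw [hRne i (Finset.mem_erase.mp hi).1]
      rw [h1]
    · -- digit N
      rw [heq]
      have hsum_eq : ∑ i, mdigit β (W i - C i) N
          = ∑ i, mdigit β (W' i - C i) N + 1 := by
        rw [sum_split i0 (fun i => mdigit β (W i - C i) N),
          sum_split i0 (fun i => mdigit β (W' i - C i) N), hyW', ← hy, hdy N,
          if_neg (lt_irrefl N), if_pos rfl]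
        have hsc : ∑ i ∈ Finset.univ.erase i0, mdigit β (W i - C i) N
            = ∑ i ∈ Finset.univ.erase i0, mdigit β (W' i - C i) N :=
          Finset.sum_congr rfl fun i hi => by
            rw [hW'ne i (Finset.mem_erase.mp hi).1]
        omega
      rw [hsum_eq]
      have hTN : (∑ i, mdigit β (W' i - C i) N) % β N = hN - 1 := by
        rw [← hgL N, hg'N]
      rw [mod_add_one hTN (by omega)]
      omega
    · -- high digits: everything vanishes
      have h0s : ∀ i, mdigit β (W i - C i) L = 0 := fun i =>
        mdigit_eq_zero (lt_of_lt_of_le (hWC_lt i) (bhat_le hβ (by omega)))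
      rw [Finset.sum_eq_zero fun i _ => h0s i, Nat.zero_mod,
        mdigit_eq_zero (lt_of_lt_of_le hhb_lt (bhat_le hβ (by omega)))]

end MainLemma

section Final
variable {β : ℕ → ℕ}

theorem stmt16' (β : ℕ → ℕ) (hβ : ∀ L, 2 ≤ β L) {m : ℕ} (hm : 1 ≤ m)
    (𝒞 : Set (Fin m → ℕ))
    (hcov : ∀ X : Fin m → ℕ, ∀ h < msigma β X,
      ∃ C ∈ 𝒞, (∀ i, C i ≤ X i) ∧ msigma β (fun i => X i - C i) = h)
    (X : Fin m → ℕ) (n h N : ℕ) (hn : n = msigma β X) (hne : h ≠ n)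
    (hN : mdigit β n N ≠ mdigit β h N)
    (hNmax : ∀ L, N < L → mdigit β n L = mdigit β h L)
    (D : Fin m → ℕ) (hDle : ∀ i, D i ≤ X i % bhat β (N + 1))
    (hDle' : ∀ i, D i ≤ X i)
    (hDcov : msigma β (fun i => X i - D i) = h) :
    ∃ C ∈ 𝒞, (∀ i, C i ≤ X i) ∧ msigma β (fun i => X i - C i) = h := by
  have hB1pos : 0 < bhat β (N + 1) := bhat_pos hβ _
  set W : Fin m → ℕ := fun i => X i % bhat β (N + 1) with hW
  have hWlt : ∀ i, W i < bhat β (N + 1) := fun i => Nat.mod_lt _ hB1pos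
  have hWX : ∀ i, W i ≤ X i := fun i => Nat.mod_le _ _
  have hA : ∀ i, bhat β (N + 1) ∣ (X i - W i) := fun i => by
    have h1 := Nat.div_add_mod (X i) (bhat β (N + 1))
    exact ⟨X i / bhat β (N + 1), by simp only [hW]; omega⟩
  have hXsplit : ∀ (C : Fin m → ℕ), (∀ i, C i ≤ W i) → ∀ i,
      X i - C i = (X i - W i) + (W i - C i) := fun C hC i => by
    have h1 := hWX i; have h2 := hC i; omega
  have key_low : ∀ (C : Fin m → ℕ), (∀ i, C i ≤ W i) → ∀ L, L ≤ N →
      mdigit β (msigma β (fun i => X i - C i)) L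
        = mdigit β (msigma β (fun i => W i - C i)) L := by
    intro C hC L hL
    rw [mdigit_msigma hβ, mdigit_msigma hβ]
    congr 1
    refine Finset.sum_congr rfl fun i _ => ?_
    rw [hXsplit C hC i, mdigit_add_high_low (hA i) hL]
  have key_high : ∀ (C : Fin m → ℕ), (∀ i, C i ≤ W i) → ∀ L, N < L →
      mdigit β (msigma β (fun i => X i - C i)) L
        = mdigit β (msigma β X) L := by
    intro C hC L hL
    rw [mdigit_msigma hβ, mdigit_msigma hβ]
    congr 1
    refine Finset.sum_congr rfl fun i _ => ?_
    have h1 : W i - C i < bhat β (N + 1) := lt_of_le_of_lt (Nat.sub_le _ _) (hWlt i)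
    have h2 : X i = (X i - W i) + W i := by have := hWX i; omega
    rw [hXsplit C hC i, mdigit_add_high_high hβ (hA i) h1 hL]
    conv_rhs => rw [h2]
    rw [mdigit_add_high_high hβ (hA i) (hWlt i) hL]
  have hDW : ∀ i, D i ≤ W i := hDle
  -- the truncated target
  set hb : ℕ := msigma β (fun i => W i - D i) with hhb
  have hzero : ∀ i, (0 : ℕ) ≤ W i := fun i => Nat.zero_le _
  have hWeq : (fun i => X i - (0:ℕ)) = X := by funext i; simp
  have hWeq2 : (fun i => W i - (0:ℕ)) = W := by funext i; simp
  have hnW : ∀ L, L ≤ N → mdigit β n L = mdigit β (msigma β W) L := by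
    intro L hL
    have := key_low (fun _ => 0) hzero L hL
    rw [hWeq, hWeq2] at this
    rw [hn, this]
  have hhbh : ∀ L, L ≤ N → mdigit β hb L = mdigit β h L := by
    intro L hL
    have := key_low D hDW L hL
    rw [hDcov] at this
    rw [hhb, ← this]
  have hdiff : mdigit β hb N ≠ mdigit β (msigma β W) N := by
    rw [hhbh N le_rfl, ← hnW N le_rfl]
    exact fun hc => hN hc.symm
  obtain ⟨C, hC𝒞, hCle, hCsig⟩ :=
    RP hβ 𝒞 hcov N (∑ i, mdigit β (W i) N) W D hb hWlt rfl hDW hhb.symm hdiff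
  refine ⟨C, hC𝒞, fun i => le_trans (hCle i) (hWX i), ?_⟩
  apply digits_inj hβ
  intro L
  rcases le_or_gt L N with hL | hL
  · rw [key_low C hCle L hL, hCsig, hhbh L hL]
  · rw [key_high C hCle L hL, ← hn, hNmax L hL]

end Final

/-- If some D with X_{≤N} - D ∈ ℕ^m covers X at h, then so does any adequately
covering set 𝒞. -/
theorem stmt16 (β : ℕ → ℕ) (hβ : ∀ L, 2 ≤ β L) {m : ℕ} (hm : 1 ≤ m)
    (𝒞 : Set (Fin m → ℕ))
    (hcov : ∀ X : Fin m → ℕ, ∀ h < msigma β X,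
      ∃ C ∈ 𝒞, (∀ i, C i ≤ X i) ∧ msigma β (fun i => X i - C i) = h)
    (X : Fin m → ℕ) (n h N : ℕ) (hn : n = msigma β X) (hne : h ≠ n)
    (hN : mdigit β n N ≠ mdigit β h N)
    (hNmax : ∀ L, N < L → mdigit β n L = mdigit β h L)
    (D : Fin m → ℕ) (hDle : ∀ i, D i ≤ X i % bhat β (N + 1))
    (hDle' : ∀ i, D i ≤ X i)
    (hDcov : msigma β (fun i => X i - D i) = h) :
    ∃ C ∈ 𝒞, (∀ i, C i ≤ X i) ∧ msigma β (fun i => X i - C i) = h := by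
  exact stmt16' β hβ hm 𝒞 hcov X n h N hn hne hN hNmax D hDle hDle' hDcov
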